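/- Fix an HMM with ε-transitions with transition probabilities parameterized by θ, a start state s₀, and an observation sequence ỹ ∈ Σⁿ with P(Y = ỹ | θᵗ) > 0. Then Q(θ | θᵗ) = ∑_{s ∈ S} ∑_{𝗍 ∈ T^s_δ} log δ(𝗍 | θ) · E_{s₀}[X_𝗍 | Y = ỹ, θᵗ] is maximized over all admissible parameters θ (i.e., all choices of δ(·|θ) making each δ(s)(·|θ) a probability function on the outgoing transitions of s) by setting, for every state s whose outgoing conditional expectations are not all zero and every 𝗍 ∈ T^s_δ, δ(𝗍 | θ) = E_{s₀}[X_𝗍 | Y = ỹ, θᵗ] / ∑_{𝗍' ∈ T^s_δ} E_{s₀}[X_{𝗍'} | Y = ỹ, θᵗ]. -/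

import Mathlib

open scoped ENNReal

/-- A Hidden Markov Model with ε-transitions: a finite state space `S`, a finite
alphabet `A`, and for each state a probability function on `(Σ ∪ {ε}) × S`,
where `ε` is modelled by `none`. -/
structure HMMeps (S A : Type*) [Fintype S] [Fintype A] where
  δ : S → Option A × S → ℝ≥0∞
  sum_one : ∀ s : S, ∑ p : Option A × S, δ s p = 1

namespace HMMeps

variable {S A : Type*} [Fintype S] [Fintype A]

/-- The probability of an alternating sequence `s₀ a₁ s₁ … a_m s_m`, represented by
its start state `s₀` together with the list of steps `[(a₁,s₁),…,(a_m,s_m)]`: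
the product of the transition probabilities. -/
noncomputable def pathProb (M : HMMeps S A) : S → List (Option A × S) → ℝ≥0∞
  | _, [] => 1
  | s, p :: rest => M.δ s p * M.pathProb p.2 rest

/-- The observable projection `Y`: the sequence of observable symbols
(ε's and states removed). -/
def obsSeq (z : List (Option A × S)) : List A := z.filterMap Prod.fst

/-- The last state `L` of a sequence starting in `s₀`. -/
def lastState (s₀ : S) (z : List (Option A × S)) : S :=
  (z.getLast?.map Prod.snd).getD s₀

/-- The sample space `Ωⁿ_{s₀} = s₀((εS)*ΣS)ⁿ`: alternating sequences containing
exactly `n` observable symbols whose second-to-last element (i.e. the symbol of the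
last transition) is observable.  (The start state is kept separately, so an element
of the sample space is just the list of steps.) -/
def Omega (S A : Type*) (n : ℕ) : Set (List (Option A × S)) :=
  {z | (obsSeq z).length = n ∧ ∀ p ∈ z.getLast?, (Prod.fst p).isSome = true}

end HMMeps

namespace HMMeps

/-- `P_{s₀}(Y = ỹ)`: the probability of observing `ỹ` starting from `s₀`. -/
noncomputable def Pobs {S A : Type*} [Fintype S] [Fintype A]
    (M : HMMeps S A) (s₀ : S) (ys : List A) : ℝ≥0∞ :=
  ∑' z : {z : List (Option A × S) // z ∈ Omega S A ys.length ∧ obsSeq z = ys},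
    M.pathProb s₀ z.1

/-- `X_𝗍`: the number of occurrences of the transition `𝗍 = (s, a, s')` in the
sequence starting in the given state with the given list of steps. -/
def countTrans {S A : Type*} [DecidableEq S] [DecidableEq A]
    (t : S × (Option A × S)) : S → List (Option A × S) → ℕ
  | _, [] => 0
  | s, p :: rest => (if (s, p) = t then 1 else 0) + countTrans t p.2 rest

/-- `C^{ỹ}_{s₀,𝗍} = ∑_{z̃ ∈ Ωⁿ_{s₀}, Y(z̃)=ỹ} X_𝗍(z̃)·Pⁿ_{s₀}(z̃)`
(equivalently `E_{s₀}[X_𝗍 ∣ Y=ỹ]·P_{s₀}(Y=ỹ)` when `P_{s₀}(Y=ỹ) > 0`). -/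
noncomputable def Cexp {S A : Type*} [Fintype S] [Fintype A]
    [DecidableEq S] [DecidableEq A]
    (M : HMMeps S A) (s₀ : S) (ys : List A) (t : S × (Option A × S)) : ℝ≥0∞ :=
  ∑' z : {z : List (Option A × S) // z ∈ Omega S A ys.length ∧ obsSeq z = ys},
    (countTrans t s₀ z.1 : ℝ≥0∞) * M.pathProb s₀ z.1

/-- Fix the HMM structure `Tstruct` and current parameters `θᵗ`
(the HMM `Mt`), a start state `s₀` and an observation `ỹ` with `P(Y=ỹ ∣ θᵗ) > 0`;
assume (standing assumption) that under `θᵗ` every state has a path of non-zero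
probability containing an observable symbol.  Write
`E 𝗍 = E_{s₀}[X_𝗍 ∣ Y=ỹ, θᵗ]` and, for parameters `θ` on the transitions of the
structure, `Q(θ ∣ θᵗ) = ∑_{s ∈ S} ∑_{𝗍 ∈ T^s_δ} log θ(𝗍) · E 𝗍`.  A parameter
setting `θ` is admissible when, for every `s`, `θ` restricted to `T^s_δ` is a
probability function.  If `θ⋆` is admissible and, for every state `s` whose
outgoing conditional expectations are not all zero, sets
`θ⋆(𝗍) = E 𝗍 / ∑_{𝗍' ∈ T^s_δ} E 𝗍'` on `T^s_δ`, then `θ⋆` maximizes `Q(· ∣ θᵗ)`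
over all admissible parameter settings. -/

-- real Gibbs inequality
lemma real_gibbs {ι : Type*} (F : Finset ι) (w θ : ι → ℝ)
    (hw : ∀ i ∈ F, 0 < w i) (hθ : ∀ i ∈ F, 0 < θ i) (hθ1 : ∑ i ∈ F, θ i ≤ 1) :
    ∑ i ∈ F, Real.log (θ i) * w i ≤ ∑ i ∈ F, Real.log (w i / ∑ j ∈ F, w j) * w i := by
  rcases F.eq_empty_or_nonempty with rfl | hne
  · simp
  set W := ∑ j ∈ F, w j with hW
  have hWpos : 0 < W := Finset.sum_pos hw hne
  rw [← sub_nonpos, ← Finset.sum_sub_distrib]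
  have hle : ∀ i ∈ F, Real.log (θ i) * w i - Real.log (w i / W) * w i
      ≤ θ i * W - w i := by
    intro i hi
    have hwi := hw i hi
    have hθi := hθ i hi
    have h1 : Real.log (θ i) - Real.log (w i / W) = Real.log (θ i / (w i / W)) := by
      rw [Real.log_div hθi.ne' (by positivity)]
    have h2 : Real.log (θ i / (w i / W)) ≤ θ i / (w i / W) - 1 :=
      Real.log_le_sub_one_of_pos (by positivity)
    calc Real.log (θ i) * w i - Real.log (w i / W) * w i
        = (Real.log (θ i) - Real.log (w i / W)) * w i := by ring
      _ ≤ (θ i / (w i / W) - 1) * w i := by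
          rw [h1]; exact mul_le_mul_of_nonneg_right h2 hwi.le
      _ = θ i * W - w i := by field_simp
  calc ∑ i ∈ F, (Real.log (θ i) * w i - Real.log (w i / W) * w i)
      ≤ ∑ i ∈ F, (θ i * W - w i) := Finset.sum_le_sum hle
    _ = (∑ i ∈ F, θ i) * W - W := by rw [Finset.sum_sub_distrib, ← Finset.sum_mul, hW]
    _ ≤ 1 * W - W := by
        have := mul_le_mul_of_nonneg_right hθ1 hWpos.le
        linarith
    _ = 0 := by ring

lemma ereal_sum_eq_bot {ι : Type*} [DecidableEq ι] {F : Finset ι} {f : ι → EReal} {a : ι}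
    (ha : a ∈ F) (hfa : f a = ⊥) : ∑ i ∈ F, f i = ⊥ := by
  rw [← Finset.add_sum_erase F f ha, hfa, EReal.bot_add]

lemma ereal_coe_sum {ι : Type*} (F : Finset ι) (f : ι → ℝ) :
    ((∑ i ∈ F, f i : ℝ) : EReal) = ∑ i ∈ F, (f i : EReal) := by
  induction F using Finset.cons_induction with
  | empty => simp
  | cons a F ha ih => rw [Finset.sum_cons, Finset.sum_cons, EReal.coe_add, ih]

lemma ennreal_coe_ereal_eq {w : ℝ≥0∞} (hw : w ≠ ⊤) :
    (w : EReal) = ((w.toReal : ℝ) : EReal) := by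
  rw [← EReal.toReal_coe_ennreal (x := w)]
  exact (EReal.coe_toReal (by simpa using hw) (by simp)).symm

lemma state_gibbs {ι : Type*} [DecidableEq ι] (F : Finset ι) (w θ θ' : ι → ℝ≥0∞)
    (hWtop : ∑ j ∈ F, w j ≠ ⊤)
    (hθ : ∑ i ∈ F, θ i = 1)
    (hθ' : ∀ i ∈ F, θ' i = w i / ∑ j ∈ F, w j) :
    ∑ i ∈ F, ENNReal.log (θ i) * (w i : EReal)
      ≤ ∑ i ∈ F, ENNReal.log (θ' i) * (w i : EReal) := by
  classical
  set W := ∑ j ∈ F, w j with hWdef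
  set F1 := F.filter (fun i => w i ≠ 0) with hF1
  have hzero : ∀ (g : ι → ℝ≥0∞), ∑ i ∈ F, ENNReal.log (g i) * (w i : EReal)
      = ∑ i ∈ F1, ENNReal.log (g i) * (w i : EReal) := by
    intro g
    refine (Finset.sum_filter_of_ne ?_).symm
    intro i _ hne
    contrapose! hne
    simp [hne, EReal.coe_ennreal_zero]
  rw [hzero θ, hzero θ']
  rcases F1.eq_empty_or_nonempty with h1 | ⟨i₀, hi₀⟩
  · simp [h1]
  have hsub : F1 ⊆ F := Finset.filter_subset _ _
  have hwne : ∀ i ∈ F1, w i ≠ 0 := fun i hi => (Finset.mem_filter.1 hi).2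
  have hwle : ∀ i ∈ F, w i ≤ W := fun i hi =>
    Finset.single_le_sum (fun _ _ => zero_le) hi
  have hwtop : ∀ i ∈ F1, w i ≠ ⊤ := fun i hi =>
    fun h => hWtop (top_le_iff.1 (h ▸ hwle i (hsub hi)))
  have hW0 : W ≠ 0 := by
    intro h
    exact hwne i₀ hi₀ (le_antisymm (h ▸ hwle i₀ (hsub hi₀)) zero_le)
  have hθle : ∀ i ∈ F, θ i ≤ 1 := fun i hi =>
    hθ ▸ Finset.single_le_sum (fun _ _ => zero_le) hi
  by_cases hθ0 : ∃ i ∈ F1, θ i = 0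
  · obtain ⟨i, hi, h0⟩ := hθ0
    have hbot : ENNReal.log (θ i) * (w i : EReal) = ⊥ := by
      rw [h0, ENNReal.log_zero]
      refine EReal.bot_mul_of_pos ?_
      rw [← EReal.coe_ennreal_zero]
      exact (EReal.coe_ennreal_lt_coe_ennreal_iff).2 (pos_iff_ne_zero.2 (hwne i hi))
    rw [ereal_sum_eq_bot hi hbot]
    exact bot_le
  replace hθ0 : ∀ i ∈ F1, θ i ≠ 0 := fun i hi h => hθ0 ⟨i, hi, h⟩
  have hθtop : ∀ i ∈ F1, θ i ≠ ⊤ := fun i hi =>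
    fun h => by simpa [h] using hθle i (hsub hi)
  have hθ'ne : ∀ i ∈ F1, θ' i ≠ 0 := by
    intro i hi
    rw [hθ' i (hsub hi)]
    simp [ENNReal.div_eq_zero_iff, hwne i hi, hWtop]
  have hθ'top : ∀ i ∈ F1, θ' i ≠ ⊤ := by
    intro i hi
    rw [hθ' i (hsub hi)]
    simp [ENNReal.div_eq_top, hW0, hwtop i hi]
  -- convert to real sums
  have hterm : ∀ (g : ι → ℝ≥0∞), (∀ i ∈ F1, g i ≠ 0) → (∀ i ∈ F1, g i ≠ ⊤) →
      ∑ i ∈ F1, ENNReal.log (g i) * (w i : EReal)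
        = ((∑ i ∈ F1, Real.log (g i).toReal * (w i).toReal : ℝ) : EReal) := by
    intro g h0 htop
    rw [ereal_coe_sum]
    refine Finset.sum_congr rfl fun i hi => ?_
    rw [ENNReal.log_pos_real (h0 i hi) (htop i hi), ennreal_coe_ereal_eq (hwtop i hi),
      ← EReal.coe_mul]
  rw [hterm θ hθ0 hθtop, hterm θ' hθ'ne hθ'top, EReal.coe_le_coe_iff]
  have hWsum : W = ∑ j ∈ F1, w j := by
    rw [hWdef, hF1]
    exact (Finset.sum_filter_of_ne (fun i _ h => h)).symm
  have hWreal : W.toReal = ∑ j ∈ F1, (w j).toReal := by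
    rw [hWsum]; exact ENNReal.toReal_sum hwtop
  have hθ'real : ∀ i ∈ F1, (θ' i).toReal = (w i).toReal / (∑ j ∈ F1, (w j).toReal) := by
    intro i hi
    rw [hθ' i (hsub hi), ENNReal.toReal_div, hWreal]
  calc ∑ i ∈ F1, Real.log (θ i).toReal * (w i).toReal
      ≤ ∑ i ∈ F1, Real.log ((w i).toReal / ∑ j ∈ F1, (w j).toReal) * (w i).toReal := by
        refine real_gibbs F1 _ _ ?_ ?_ ?_
        · exact fun i hi => ENNReal.toReal_pos (hwne i hi) (hwtop i hi)
        · exact fun i hi => ENNReal.toReal_pos (hθ0 i hi) (hθtop i hi)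
        · have hle : ∑ i ∈ F1, θ i ≤ 1 := hθ ▸ Finset.sum_le_sum_of_subset hsub
          have := ENNReal.toReal_mono ENNReal.one_ne_top hle
          rwa [ENNReal.toReal_one, ENNReal.toReal_sum hθtop] at this
    _ = ∑ i ∈ F1, Real.log ((θ' i).toReal) * (w i).toReal := by
        refine Finset.sum_congr rfl fun i hi => ?_
        rw [hθ'real i hi]


theorem Q_maximized_by_normalized_expectations {S A : Type*} [Fintype S] [Fintype A]
    [DecidableEq S] [DecidableEq A]
    (Tstruct : Finset (S × (Option A × S)))
    (Mt : HMMeps S A)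
    (ht : ∀ s p, Mt.δ s p ≠ 0 → (s, p) ∈ Tstruct)
    (hreach : ∀ s : S, ∃ z : List (Option A × S),
      0 < Mt.pathProb s z ∧ ∃ p ∈ z, (Prod.fst p).isSome = true)
    (s₀ : S) (ys : List A) (hpos : Pobs Mt s₀ ys ≠ 0)
    (condE : S × (Option A × S) → ℝ≥0∞)
    (hE : ∀ t, condE t = Cexp Mt s₀ ys t / Pobs Mt s₀ ys)
    (θstar : S × (Option A × S) → ℝ≥0∞)
    (hstar_adm : ∀ s : S, ∑ t ∈ Tstruct.filter (fun t => t.1 = s), θstar t = 1)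
    (hstar : ∀ s : S,
      (∃ t ∈ Tstruct.filter (fun t => t.1 = s), condE t ≠ 0) →
      ∀ t ∈ Tstruct.filter (fun t => t.1 = s),
        θstar t = condE t / ∑ t' ∈ Tstruct.filter (fun t' => t'.1 = s), condE t') :
    ∀ θ : S × (Option A × S) → ℝ≥0∞,
      (∀ s : S, ∑ t ∈ Tstruct.filter (fun t => t.1 = s), θ t = 1) →
      (∑ s : S, ∑ t ∈ Tstruct.filter (fun t => t.1 = s),
          ENNReal.log (θ t) * ((condE t : ℝ≥0∞) : EReal))
        ≤ ∑ s : S, ∑ t ∈ Tstruct.filter (fun t => t.1 = s),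
            ENNReal.log (θstar t) * ((condE t : ℝ≥0∞) : EReal) := by
  intro θ hθadm
  refine Finset.sum_le_sum fun s _ => ?_
  set F := Tstruct.filter (fun t => t.1 = s) with hF
  by_cases hall : ∀ t ∈ F, condE t = 0
  · have h0 : ∀ g : S × (Option A × S) → ℝ≥0∞,
        ∑ t ∈ F, ENNReal.log (g t) * ((condE t : ℝ≥0∞) : EReal) = 0 := by
      intro g
      refine Finset.sum_eq_zero fun t ht => ?_
      rw [hall t ht]
      simp
    rw [h0 θ, h0 θstar]
  · push_neg at hall
    obtain ⟨t₀, ht₀, hne₀⟩ := hall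
    have hex : ∃ t ∈ F, condE t ≠ 0 := ⟨t₀, ht₀, hne₀⟩
    have hWtop : ∑ t' ∈ F, condE t' ≠ ⊤ := by
      intro htop
      have h0 : ∀ t ∈ F, θstar t = 0 := by
        intro t ht
        rw [hstar s hex t ht, htop, ENNReal.div_top]
      have := hstar_adm s
      rw [← hF, Finset.sum_eq_zero h0] at this
      exact one_ne_zero this.symm
    have hadm : ∑ t ∈ F, θ t = 1 := by rw [hF]; exact hθadm s
    exact state_gibbs F condE θ θstar hWtop hadm (fun t ht => hstar s hex t ht)

end HMMeps
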